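/- Utility representation: For any compact delegation set D, with u_A(D,θ) = max_{y∈D} u_A(y,θ) and y_A(D,θ) the (a.e.-unique) maximizer, the principal's informed-agent payoff u_{P,1}(D) = ∫ u_P(y_A(D,θ),θ) f(θ)dθ satisfies u_{P,1}(D) = u_A(D,θ̲)B(θ̲)f(θ̲) − u_A(D,θ̄)B(θ̄)f(θ̄) + ∫_{θ̲}^{θ̄} u_A(D,θ)[f(θ) + (B(θ)f(θ))'] dθ. -/

import Mathlib

open Set Filter

open MeasureTheory intervalIntegral in
/-- Utility representation: the principal's informed-agent payoff is a weighted combination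
of the agent's value function, with boundary terms `u_A(D,θ̲)B(θ̲)f(θ̲) − u_A(D,θ̄)B(θ̄)f(θ̄)`
and integral weight `f(θ) + (B(θ)f(θ))'`. -/
theorem stmt_12 (θl θu : ℝ) (hθ : θl < θu) (a b b' f f' B g : ℝ → ℝ)
    (ha : Continuous a)
    (hb : ∀ θ ∈ Icc θl θu, HasDerivAt b (b' θ) θ)
    (hb'cont : ContinuousOn b' (Icc θl θu))
    (hb' : ∀ θ ∈ Icc θl θu, -1 < b' θ)
    (hB : ∀ θ ∈ Icc θl θu, B θ = b θ / (1 + b' θ))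
    (hf : ∀ θ ∈ Icc θl θu, HasDerivAt f (f' θ) θ)
    (hf'cont : ContinuousOn f' (Icc θl θu))
    (hfpos : ∀ θ ∈ Icc θl θu, 0 < f θ)
    (hfdens : (∫ θ in θl..θu, f θ) = 1)
    (hg : ∀ θ ∈ Icc θl θu, HasDerivAt (fun t => B t * f t) (g θ) θ)
    (hgcont : ContinuousOn g (Icc θl θu))
    (D : Set ℝ) (hD : D.Nonempty) (hDc : IsCompact D)
    (yAD : ℝ → ℝ) (hmeas : Measurable yAD)
    (hsel : ∀ θ ∈ Icc θl θu, yAD θ ∈ D ∧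
      ∀ y ∈ D, (θ + b θ) * y + a y ≤ (θ + b θ) * yAD θ + a (yAD θ)) :
    (∫ θ in θl..θu, (θ * yAD θ + a (yAD θ)) * f θ)
      = (sSup ((fun y => (θl + b θl) * y + a y) '' D)) * B θl * f θl
        - (sSup ((fun y => (θu + b θu) * y + a y) '' D)) * B θu * f θu
        + ∫ θ in θl..θu, (sSup ((fun y => (θ + b θ) * y + a y) '' D)) * (f θ + g θ) := by
  set V : ℝ → ℝ := fun θ => sSup ((fun y => (θ + b θ) * y + a y) '' D) with hVdef
  have hlmem : θl ∈ Icc θl θu := ⟨le_rfl, hθ.le⟩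
  have humem : θu ∈ Icc θl θu := ⟨hθ.le, le_rfl⟩
  -- bound on D
  obtain ⟨C, hC⟩ : ∃ C, ∀ y ∈ D, |y| ≤ C := by
    obtain ⟨C, hC⟩ := hDc.exists_bound_of_continuousOn continuousOn_id
    exact ⟨C, fun y hy => hC y hy⟩
  have hC0 : 0 ≤ C := (abs_nonneg _).trans (hC _ (hsel θl hlmem).1)
  -- value of V
  have hVval : ∀ θ ∈ Icc θl θu, V θ = (θ + b θ) * yAD θ + a (yAD θ) := by
    intro θ hθm
    refine le_antisymm (csSup_le (hD.image _) ?_) (le_csSup ?_ ?_)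
    · rintro _ ⟨y, hy, rfl⟩
      exact (hsel θ hθm).2 y hy
    · exact ⟨(θ + b θ) * yAD θ + a (yAD θ), by rintro _ ⟨y, hy, rfl⟩; exact (hsel θ hθm).2 y hy⟩
    · exact ⟨yAD θ, (hsel θ hθm).1, rfl⟩
  have hVge : ∀ θ ∈ Icc θl θu, ∀ y ∈ D, (θ + b θ) * y + a y ≤ V θ := by
    intro θ hθm y hy
    calc (θ + b θ) * y + a y ≤ (θ + b θ) * yAD θ + a (yAD θ) := (hsel θ hθm).2 y hy
    _ = V θ := (hVval θ hθm).symm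
  -- sandwich
  have hsand : ∀ s ∈ Icc θl θu, ∀ t ∈ Icc θl θu,
      ((t + b t) - (s + b s)) * yAD s ≤ V t - V s := by
    intro s hs t ht
    have h1 := hVge t ht (yAD s) (hsel s hs).1
    have h2 := hVval s hs
    nlinarith [h1, h2]
  -- h := θ + b θ continuous / strict mono
  have hhderiv : ∀ θ ∈ Icc θl θu, HasDerivAt (fun t => t + b t) (1 + b' θ) θ := by
    intro θ hθm
    exact (hasDerivAt_id θ).add (hb θ hθm)
  have hhcont : ContinuousOn (fun t => t + b t) (Icc θl θu) := by
    intro θ hθm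
    exact ((hhderiv θ hθm).continuousAt).continuousWithinAt
  have hhmono : StrictMonoOn (fun t => t + b t) (Icc θl θu) := by
    apply strictMonoOn_of_deriv_pos (convex_Icc _ _) hhcont
    intro x hx
    rw [interior_Icc] at hx
    rw [(hhderiv x (Ioo_subset_Icc_self hx)).deriv]
    linarith [hb' x (Ioo_subset_Icc_self hx)]
  -- monotonicity of yAD
  have hymono : MonotoneOn yAD (Icc θl θu) := by
    intro s hs t ht hst
    rcases eq_or_lt_of_le hst with rfl | hlt
    · exact le_rfl
    · have hA : (s + b s) < (t + b t) := hhmono hs ht hlt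
      have i1 := hsand s hs t ht
      have i2 := hsand t ht s hs
      nlinarith [i1, i2]
  -- continuity of V on Icc
  have hVlip : ∀ s ∈ Icc θl θu, ∀ t ∈ Icc θl θu,
      |V t - V s| ≤ C * |(t + b t) - (s + b s)| := by
    intro s hs t ht
    have i1 := hsand s hs t ht
    have i2 := hsand t ht s hs
    have j1 : -C ≤ yAD s ∧ yAD s ≤ C := abs_le.1 (hC _ (hsel s hs).1)
    have j2 : -C ≤ yAD t ∧ yAD t ≤ C := abs_le.1 (hC _ (hsel t ht).1)
    rw [abs_le]
    rcases abs_choice ((t + b t) - (s + b s)) with hc | hc <;> rw [hc] <;>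
      constructor <;>
      nlinarith [abs_nonneg ((t + b t) - (s + b s)), i1, i2, j1.1, j1.2, j2.1, j2.2, hc]
  have hVcont : ContinuousOn V (Icc θl θu) := by
    intro x hx
    rw [ContinuousWithinAt, tendsto_iff_dist_tendsto_zero]
    have hbnd : Tendsto (fun t => C * dist ((fun t => t + b t) t) ((fun t => t + b t) x))
        (nhdsWithin x (Icc θl θu)) (nhds 0) := by
      have := tendsto_iff_dist_tendsto_zero.1 (hhcont x hx)
      simpa using tendsto_const_nhds.mul this
    apply squeeze_zero' (Eventually.of_forall (fun t => dist_nonneg)) ?_ hbnd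
    filter_upwards [self_mem_nhdsWithin] with t ht
    simp only [Real.dist_eq]
    exact hVlip x hx t ht
  -- monotone extension of yAD and its right limit
  set z : ℝ → ℝ := fun t => yAD (max θl (min t θu)) with hzdef
  have hclamp : ∀ t, max θl (min t θu) ∈ Icc θl θu := fun t =>
    ⟨le_max_left _ _, max_le hθ.le (min_le_right _ _)⟩
  have hzmono : Monotone z := by
    intro s t hst
    exact hymono (hclamp s) (hclamp t)
      (max_le_max le_rfl (min_le_min_right _ hst))
  have hzeq : ∀ t ∈ Icc θl θu, z t = yAD t := by
    intro t ht
    simp only [hzdef]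
    rw [min_eq_left ht.2, max_eq_right ht.1]
  have hSc : {x | ¬ContinuousAt z x}.Countable := hzmono.countable_not_continuousAt
  set w : ℝ → ℝ := Function.rightLim z with hwdef
  have hztendsto : ∀ x, Tendsto z (nhdsWithin x (Ioi x)) (nhds (w x)) :=
    fun x => hzmono.tendsto_rightLim x
  have hwz : ∀ x, ContinuousAt z x → w x = z x := by
    intro x hx
    exact hzmono.continuousWithinAt_Ioi_iff_rightLim_eq.1 hx.continuousWithinAt
  have hzb : ∀ t, |z t| ≤ C := fun t => hC _ (hsel _ (hclamp t)).1
  have hwb : ∀ x, |w x| ≤ C := by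
    intro x
    rw [abs_le]
    constructor
    · exact ge_of_tendsto (hztendsto x)
        (Eventually.of_forall fun t => (abs_le.1 (hzb t)).1)
    · exact le_of_tendsto (hztendsto x)
        (Eventually.of_forall fun t => (abs_le.1 (hzb t)).2)
  have hwmono : Monotone w := hzmono.rightLim
  -- tendsto of yAD to right limit
  have hytendsto : ∀ x ∈ Ioo θl θu, Tendsto yAD (nhdsWithin x (Ioi x)) (nhds (w x)) := by
    intro x hx
    apply (hztendsto x).congr'
    filter_upwards [Ioo_mem_nhdsGT_of_mem (⟨le_rfl, hx.2⟩ : x ∈ Ico x θu)] with s hs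
    exact hzeq s ⟨hx.1.le.trans hs.1.le, hs.2.le⟩
  -- right derivative of V
  have hVderiv : ∀ x ∈ Ioo θl θu, HasDerivWithinAt V ((1 + b' x) * w x) (Ioi x) x := by
    intro x hx
    have hxI : x ∈ Icc θl θu := Ioo_subset_Icc_self hx
    have hIooMem : Ioo x θu ∈ nhdsWithin x (Ioi x) :=
      Ioo_mem_nhdsGT_of_mem ⟨le_rfl, hx.2⟩
    have hVt : Tendsto V (nhdsWithin x (Ioi x)) (nhds (V x)) :=
      (hVcont x hxI).mono_left
        ((nhdsWithin_le_of_mem hIooMem).trans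
          (nhdsWithin_mono x (fun s hs => (⟨hx.1.le.trans hs.1.le, hs.2.le⟩ : s ∈ Icc θl θu))))
    have hht : Tendsto (fun s => s + b s) (nhdsWithin x (Ioi x)) (nhds (x + b x)) :=
      ((hhderiv x hxI).continuousAt.tendsto).mono_left nhdsWithin_le_nhds
    have lower : ∀ t ∈ Ioc x θu, ((t + b t) - (x + b x)) * w x ≤ V t - V x := by
      intro t ht
      have htI : t ∈ Icc θl θu := ⟨hx.1.le.trans ht.1.le, ht.2⟩
      refine le_of_tendsto_of_tendsto
        (f := fun s => ((t + b t) - (s + b s)) * yAD s)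
        (g := fun s => V t - V s) (b := nhdsWithin x (Ioi x))
        ((tendsto_const_nhds.sub hht).mul (hytendsto x hx))
        (tendsto_const_nhds.sub hVt) ?_
      filter_upwards [Ioo_mem_nhdsGT_of_mem (⟨le_rfl, ht.1⟩ : x ∈ Ico x t)] with s hs
      exact hsand s ⟨hx.1.le.trans hs.1.le, hs.2.le.trans ht.2⟩ t htI
    have upper : ∀ t ∈ Ioc x θu, V t - V x ≤ ((t + b t) - (x + b x)) * yAD t := by
      intro t ht
      have htI : t ∈ Icc θl θu := ⟨hx.1.le.trans ht.1.le, ht.2⟩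
      have h1 := hsand t htI x hxI
      nlinarith [h1]
    rw [hasDerivWithinAt_iff_tendsto_slope' (notMem_Ioi.2 le_rfl)]
    have hslopeh : Tendsto (slope (fun t => t + b t) x) (nhdsWithin x (Ioi x))
        (nhds (1 + b' x)) := by
      have h2 := (hhderiv x hxI).hasDerivWithinAt (s := Ioi x)
      rwa [hasDerivWithinAt_iff_tendsto_slope' (notMem_Ioi.2 le_rfl)] at h2
    refine tendsto_of_tendsto_of_tendsto_of_le_of_le'
      (g := fun t => slope (fun s => s + b s) x t * w x)
      (h := fun t => slope (fun s => s + b s) x t * yAD t)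
      (hslopeh.mul tendsto_const_nhds) (hslopeh.mul (hytendsto x hx)) ?_ ?_
    · filter_upwards [hIooMem] with t htm
      have hpos : 0 < t - x := sub_pos.2 htm.1
      have hl := lower t ⟨htm.1, htm.2.le⟩
      simp only [slope_def_field]
      rw [div_mul_eq_mul_div]
      exact (div_le_div_iff_of_pos_right hpos).2 hl
    · filter_upwards [hIooMem] with t htm
      have hpos : 0 < t - x := sub_pos.2 htm.1
      have hu := upper t ⟨htm.1, htm.2.le⟩
      simp only [slope_def_field]
      rw [div_mul_eq_mul_div]
      exact (div_le_div_iff_of_pos_right hpos).2 hu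
  -- generic integrability of (continuous) * (bounded measurable)
  have hIntMul : ∀ ψ u : ℝ → ℝ, ContinuousOn ψ (Icc θl θu) → Measurable u →
      (∀ x ∈ Icc θl θu, |u x| ≤ C) →
      IntervalIntegrable (fun x => ψ x * u x) volume θl θu := by
    intro ψ u hψ hu hub
    rw [intervalIntegrable_iff_integrableOn_Ioc_of_le hθ.le]
    obtain ⟨Cψ, hCψ⟩ := isCompact_Icc.exists_bound_of_continuousOn hψ
    constructor
    · exact (((hψ.mono Ioc_subset_Icc_self).aemeasurable measurableSet_Ioc).mul
        hu.aemeasurable).aestronglyMeasurable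
    · apply MeasureTheory.HasFiniteIntegral.restrict_of_bounded (C := Cψ * C)
        measure_Ioc_lt_top
      filter_upwards [MeasureTheory.ae_restrict_mem measurableSet_Ioc] with x hx
      have hxI : x ∈ Icc θl θu := Ioc_subset_Icc_self hx
      rw [Real.norm_eq_abs, abs_mul]
      have h1 : |ψ x| ≤ Cψ := hCψ x hxI
      have h2 : |u x| ≤ C := hub x hxI
      exact mul_le_mul h1 h2 (abs_nonneg _) ((abs_nonneg _).trans h1)
  have hyb : ∀ x ∈ Icc θl θu, |yAD x| ≤ C := fun x hx => hC _ (hsel x hx).1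
  have hBfcont : ContinuousOn (fun t => B t * f t) (Icc θl θu) := fun x hx =>
    ((hg x hx).continuousAt).continuousWithinAt
  have hfcont : ContinuousOn f (Icc θl θu) := fun x hx =>
    ((hf x hx).continuousAt).continuousWithinAt
  have hbcont : ContinuousOn b (Icc θl θu) := fun x hx =>
    ((hb x hx).continuousAt).continuousWithinAt
  -- FTC / integration by parts
  have hFTC : (∫ x in θl..θu, (g x * V x + (B x * f x * (1 + b' x)) * w x))
      = B θu * f θu * V θu - B θl * f θl * V θl := by
    apply intervalIntegral.integral_eq_sub_of_hasDeriv_right_of_le hθ.le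
    · exact hBfcont.mul hVcont
    · intro x hx
      have hxI := Ioo_subset_Icc_self hx
      have hprod := ((hg x hxI).hasDerivWithinAt (s := Ioi x)).mul (hVderiv x hx)
      exact hprod.congr_deriv (by ring)
    · apply IntervalIntegrable.add
      · apply ContinuousOn.intervalIntegrable
        rw [uIcc_of_le hθ.le]
        exact hgcont.mul hVcont
      · exact hIntMul _ _ (hBfcont.mul (continuousOn_const.add hb'cont))
          hwmono.measurable (fun x _ => hwb x)
  -- replace `w` by `yAD` and `B (1 + b')` by `b` a.e.
  have hae : (∫ x in θl..θu, (g x * V x + (B x * f x * (1 + b' x)) * w x))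
      = ∫ x in θl..θu, (g x * V x + b x * f x * yAD x) := by
    apply intervalIntegral.integral_congr_ae
    have hS0 : ∀ᵐ x : ℝ, x ∉ {x | ¬ContinuousAt z x} :=
      measure_eq_zero_iff_ae_notMem.1 (hSc.measure_zero _)
    filter_upwards [hS0] with x hx hxm
    rw [uIoc_of_le hθ.le] at hxm
    have hxI : x ∈ Icc θl θu := Ioc_subset_Icc_self hxm
    have hcont : ContinuousAt z x := not_not.1 hx
    have hw : w x = yAD x := (hwz x hcont).trans (hzeq x hxI)
    have h1b : (1 : ℝ) + b' x ≠ 0 := by linarith [hb' x hxI]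
    have hbx : B x * (1 + b' x) = b x := by rw [hB x hxI]; field_simp
    rw [hw]
    linear_combination (f x * yAD x) * hbx
  -- integrability of the pieces
  have hVf : IntervalIntegrable (fun x => V x * f x) volume θl θu := by
    apply ContinuousOn.intervalIntegrable
    rw [uIcc_of_le hθ.le]
    exact hVcont.mul hfcont
  have hVg : IntervalIntegrable (fun x => V x * g x) volume θl θu := by
    apply ContinuousOn.intervalIntegrable
    rw [uIcc_of_le hθ.le]
    exact hVcont.mul hgcont
  have hgV : IntervalIntegrable (fun x => g x * V x) volume θl θu := by
    apply ContinuousOn.intervalIntegrable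
    rw [uIcc_of_le hθ.le]
    exact hgcont.mul hVcont
  have hbfy : IntervalIntegrable (fun x => b x * f x * yAD x) volume θl θu :=
    hIntMul (fun x => b x * f x) yAD (hbcont.mul hfcont) hmeas hyb
  have hsplit : (∫ x in θl..θu, (g x * V x + b x * f x * yAD x))
      = (∫ x in θl..θu, g x * V x) + ∫ x in θl..θu, b x * f x * yAD x :=
    intervalIntegral.integral_add hgV hbfy
  have hcomm : (∫ x in θl..θu, g x * V x) = ∫ x in θl..θu, V x * g x :=
    intervalIntegral.integral_congr fun x _ => mul_comm _ _
  -- rewrite the left-hand side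
  have hLHS : (∫ θ in θl..θu, (θ * yAD θ + a (yAD θ)) * f θ)
      = (∫ θ in θl..θu, V θ * f θ) - ∫ θ in θl..θu, b θ * f θ * yAD θ := by
    rw [← intervalIntegral.integral_sub hVf hbfy]
    apply intervalIntegral.integral_congr
    intro x hx
    rw [uIcc_of_le hθ.le] at hx
    show (x * yAD x + a (yAD x)) * f x = V x * f x - b x * f x * yAD x
    rw [hVval x hx]
    ring
  -- rewrite the right-hand integral
  have hRHS : (∫ θ in θl..θu, sSup ((fun y => (θ + b θ) * y + a y) '' D) * (f θ + g θ))
      = (∫ θ in θl..θu, V θ * f θ) + ∫ θ in θl..θu, V θ * g θ := by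
    have heq : (fun θ => sSup ((fun y => (θ + b θ) * y + a y) '' D) * (f θ + g θ))
        = fun θ => V θ * f θ + V θ * g θ := by
      funext θ
      show V θ * (f θ + g θ) = _
      ring
    rw [heq, intervalIntegral.integral_add hVf hVg]
  rw [hLHS, hRHS,
    show sSup ((fun y => (θl + b θl) * y + a y) '' D) = V θl from rfl,
    show sSup ((fun y => (θu + b θu) * y + a y) '' D) = V θu from rfl]
  linarith [hFTC, hae, hsplit, hcomm]
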